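/- Let Y → X → Z₁ ⊕ Z₂ → Y[1] be a distinguished triangle in 𝒟 whose third map has components h₁ : Z₁ → Y[1] and h₂ : Z₂ → Y[1]. Then there exist objects X₁ and X₂ of 𝒟 together with: (1) distinguished triangles Y → X₁ → Z₁ →h₁ Y[1] and Y → X₂ → Z₂ →h₂ Y[1]; and (2) distinguished triangles X₁ → X → Z₂ → X₁[1] and X₂ → X → Z₁ → X₂[1]. -/

import Mathlib

open CategoryTheory CategoryTheory.Limits CategoryTheory.Pretriangulated

universe v u

lemma key_half {C : Type u} [Category.{v} C] [Preadditive C] [HasZeroObject C]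
    [HasShift C ℤ] [∀ n : ℤ, (shiftFunctor C n).Additive] [Pretriangulated C]
    [IsTriangulated C] [HasBinaryBiproducts C]
    (Y X Z₁ Z₂ : C) (f : Y ⟶ X) (g : X ⟶ Z₁ ⊞ Z₂) (h : Z₁ ⊞ Z₂ ⟶ Y⟦(1 : ℤ)⟧)
    (hT : Triangle.mk f g h ∈ distTriang C) :
    ∃ (X₁ : C) (a₁ : Y ⟶ X₁) (b₁ : X₁ ⟶ Z₁) (u₁ : X₁ ⟶ X) (w₁ : Z₂ ⟶ X₁⟦(1 : ℤ)⟧),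
      (Triangle.mk a₁ b₁ (biprod.inl ≫ h) ∈ distTriang C) ∧
      (Triangle.mk u₁ (g ≫ biprod.snd) w₁ ∈ distTriang C) := by
  obtain ⟨X₁, u₁, w₁, hTx⟩ := distinguished_cocone_triangle₁ (g ≫ (biprod.snd : Z₁ ⊞ Z₂ ⟶ Z₂))
  have h₁₂ : Triangle.mk g h (-f⟦(1:ℤ)⟧') ∈ distTriang C := rot_of_distTriang _ hT
  have h₂₃ : Triangle.mk (biprod.snd : Z₁ ⊞ Z₂ ⟶ Z₂) (0 : Z₂ ⟶ Z₁⟦(1:ℤ)⟧)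
      (-(biprod.inl : Z₁ ⟶ Z₁ ⊞ Z₂)⟦(1:ℤ)⟧') ∈ distTriang C :=
    rot_of_distTriang _ (binaryBiproductTriangle_distinguished Z₁ Z₂)
  have h₁₃ : Triangle.mk (g ≫ biprod.snd) w₁ (-u₁⟦(1:ℤ)⟧') ∈ distTriang C :=
    rot_of_distTriang _ hTx
  obtain oct := Triangulated.someOctahedron rfl h₁₂ h₂₃ h₁₃
  have mem := oct.mem
  set m₁ := oct.m₁ with hm₁
  set m₃ := oct.m₃ with hm₃
  let a₁ : Y ⟶ X₁ := (shiftFunctor C (1:ℤ)).preimage m₁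
  let b₁ : X₁ ⟶ Z₁ := (shiftFunctor C (1:ℤ)).preimage m₃
  have ha : a₁⟦(1:ℤ)⟧' = m₁ := Functor.map_preimage _ _
  have hb : b₁⟦(1:ℤ)⟧' = m₃ := Functor.map_preimage _ _
  refine ⟨X₁, a₁, b₁, u₁, w₁, ?_, hTx⟩
  set S := Triangle.mk a₁ b₁ (biprod.inl ≫ h) with hS
  have memS : (CategoryTheory.shiftFunctor (Triangle C) (1:ℤ)).obj S ∈ distTriang C := by
    refine isomorphic_distinguished _ mem _ ?_
    refine Triangle.isoMk _ _ (-(Iso.refl _)) (Iso.refl _) (-(Iso.refl _)) ?_ ?_ ?_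
    · dsimp [S]
      change ((1:ℤ).negOnePow • a₁⟦(1:ℤ)⟧') ≫ 𝟙 (X₁⟦(1:ℤ)⟧) = (-𝟙 (Y⟦(1:ℤ)⟧)) ≫ m₁
      simp [ha]
    · dsimp [S]
      change ((1:ℤ).negOnePow • b₁⟦(1:ℤ)⟧') ≫ (-𝟙 (Z₁⟦(1:ℤ)⟧)) = 𝟙 (X₁⟦(1:ℤ)⟧) ≫ m₃
      simp [hb]
    · dsimp [S]
      change ((1:ℤ).negOnePow • (biprod.inl ≫ h)⟦(1:ℤ)⟧' ≫ (shiftFunctorComm C 1 1).hom.app Y) ≫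
        (-𝟙 (Y⟦(1:ℤ)⟧))⟦(1:ℤ)⟧' = (-𝟙 (Z₁⟦(1:ℤ)⟧)) ≫
        ((-(biprod.inl : Z₁ ⟶ Z₁ ⊞ Z₂)⟦(1:ℤ)⟧') ≫ h⟦(1:ℤ)⟧')
      simp [shiftFunctorComm_eq_refl]
  exact isomorphic_distinguished _
    (Triangle.shift_distinguished _ memS (-1)) _
    ((shiftEquiv (Triangle C) (1:ℤ)).unitIso.app S)

/-- Given a distinguished triangle `Y → X → Z₁ ⊞ Z₂ → Y⟦1⟧` in a
triangulated category with finite biproducts, whose third map has components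
`h₁ = biprod.inl ≫ h` and `h₂ = biprod.inr ≫ h`, there exist objects `X₁`, `X₂`
together with distinguished triangles `Y → X₁ → Z₁ →h₁ Y⟦1⟧`, `Y → X₂ → Z₂ →h₂ Y⟦1⟧`,
`X₁ → X → Z₂ → X₁⟦1⟧` and `X₂ → X → Z₁ → X₂⟦1⟧`. -/
theorem stmt_0 {C : Type u} [Category.{v} C] [Preadditive C] [HasZeroObject C]
    [HasShift C ℤ] [∀ n : ℤ, (shiftFunctor C n).Additive] [Pretriangulated C]
    [IsTriangulated C] [HasBinaryBiproducts C]
    (Y X Z₁ Z₂ : C) (f : Y ⟶ X) (g : X ⟶ Z₁ ⊞ Z₂) (h : Z₁ ⊞ Z₂ ⟶ Y⟦(1 : ℤ)⟧)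
    (hT : Triangle.mk f g h ∈ distTriang C) :
    ∃ (X₁ X₂ : C)
      (a₁ : Y ⟶ X₁) (b₁ : X₁ ⟶ Z₁) (a₂ : Y ⟶ X₂) (b₂ : X₂ ⟶ Z₂)
      (u₁ : X₁ ⟶ X) (v₁ : X ⟶ Z₂) (w₁ : Z₂ ⟶ X₁⟦(1 : ℤ)⟧)
      (u₂ : X₂ ⟶ X) (v₂ : X ⟶ Z₁) (w₂ : Z₁ ⟶ X₂⟦(1 : ℤ)⟧),
      (Triangle.mk a₁ b₁ (biprod.inl ≫ h) ∈ distTriang C) ∧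
      (Triangle.mk a₂ b₂ (biprod.inr ≫ h) ∈ distTriang C) ∧
      (Triangle.mk u₁ v₁ w₁ ∈ distTriang C) ∧
      Triangle.mk u₂ v₂ w₂ ∈ distTriang C := by
  obtain ⟨X₁, a₁, b₁, u₁, w₁, hd₁, hd₁'⟩ := key_half Y X Z₁ Z₂ f g h hT
  have hT' : Triangle.mk f (g ≫ (biprod.braiding Z₁ Z₂).hom)
      ((biprod.braiding Z₁ Z₂).inv ≫ h) ∈ distTriang C := by
    refine isomorphic_distinguished _ hT _ ?_
    exact Triangle.isoMk _ _ (Iso.refl _) (Iso.refl _) (biprod.braiding Z₁ Z₂).symm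
      (by change f ≫ 𝟙 X = 𝟙 Y ≫ f; simp)
      (by change (g ≫ (biprod.braiding Z₁ Z₂).hom) ≫ (biprod.braiding Z₁ Z₂).symm.hom = 𝟙 X ≫ g; simp)
      (by change ((biprod.braiding Z₁ Z₂).inv ≫ h) ≫ (𝟙 Y)⟦(1:ℤ)⟧' = (biprod.braiding Z₁ Z₂).symm.hom ≫ h; simp)
  obtain ⟨X₂, a₂, b₂, u₂, w₂, hd₂, hd₂'⟩ := key_half Y X Z₂ Z₁ f
    (g ≫ (biprod.braiding Z₁ Z₂).hom) ((biprod.braiding Z₁ Z₂).inv ≫ h) hT'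
  have e1 : (biprod.inl : Z₂ ⟶ Z₂ ⊞ Z₁) ≫ ((biprod.braiding Z₁ Z₂).inv ≫ h)
      = biprod.inr ≫ h := by
    rw [← Category.assoc]
    congr 1
    ext <;> simp
  have e2 : (g ≫ (biprod.braiding Z₁ Z₂).hom) ≫ (biprod.snd : Z₂ ⊞ Z₁ ⟶ Z₁)
      = g ≫ biprod.fst := by simp
  rw [e1] at hd₂
  rw [e2] at hd₂'
  exact ⟨X₁, X₂, a₁, b₁, a₂, b₂, u₁, g ≫ biprod.snd, w₁, u₂, g ≫ biprod.fst, w₂,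
    hd₁, hd₂, hd₁', hd₂'⟩
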